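/- Fix s₀ > 0 and C₂ > 1. With L_n = ⌊(log n)^{1/2}⌋, there exists a constant c > 0 such that for all large n, L_n · (C₂^{2L_n}/n)^{s₀/(2s₀ + L_n)} ≤ c · (log n)^{1/2} · exp(−(s₀/2)·(log n)^{1/2}). -/
import Mathlib


open Real

/-- With L_n = ⌊√(log n)⌋ and C₂ > 1, s₀ > 0, there is c > 0 such that for large n:
L_n (C₂^{2L_n}/n)^{s₀/(2s₀+L_n)} ≤ c √(log n) exp(−(s₀/2)√(log n)). -/
theorem stmt3 (s₀ C₂ : ℝ) (hs : 0 < s₀) (hC : 1 < C₂) :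
    ∃ c : ℝ, 0 < c ∧ ∃ N : ℕ, ∀ n : ℕ, N ≤ n →
      (⌊Real.sqrt (Real.log n)⌋₊ : ℝ) *
          ((C₂ ^ (2 * ⌊Real.sqrt (Real.log n)⌋₊) / (n : ℝ)) ^
            (s₀ / (2 * s₀ + (⌊Real.sqrt (Real.log n)⌋₊ : ℝ)))) ≤
        c * Real.sqrt (Real.log n) * Real.exp (-(s₀ / 2) * Real.sqrt (Real.log n)) := by
  refine ⟨Real.exp (2 * s₀ * Real.log C₂ + 2 * s₀ ^ 2), Real.exp_pos _, 3, fun n hn => ?_⟩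
  have hn3 : (3 : ℝ) ≤ n := by exact_mod_cast hn
  have hnpos : (0 : ℝ) < n := by linarith
  have hlog : 1 ≤ Real.log n := by
    have he : Real.exp 1 ≤ 3 := by
      nlinarith [Real.exp_one_lt_d9]
    calc 1 = Real.log (Real.exp 1) := (Real.log_exp 1).symm
      _ ≤ Real.log n := Real.log_le_log (Real.exp_pos 1) (le_trans he hn3)
  set t := Real.sqrt (Real.log n) with htdef
  have hlognn : 0 ≤ Real.log n := by linarith
  have ht1 : 1 ≤ t := by
    rw [htdef, show (1:ℝ) = Real.sqrt 1 by simp]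
    exact Real.sqrt_le_sqrt hlog
  have htsq : t ^ 2 = Real.log n := Real.sq_sqrt hlognn
  set L := ⌊t⌋₊ with hLdef
  have hLt : (L : ℝ) ≤ t := Nat.floor_le (Real.sqrt_nonneg _)
  have hL1 : (1 : ℝ) ≤ L := by
    exact_mod_cast Nat.le_floor (by exact_mod_cast ht1)
  have hLpos : (0 : ℝ) < L := by linarith
  have hC0 : (0 : ℝ) < C₂ := by linarith
  have hlC : 0 < Real.log C₂ := Real.log_pos hC
  have hbase : 0 < C₂ ^ (2 * L) / (n : ℝ) := div_pos (pow_pos hC0 _) hnpos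
  have ha : 0 < 2 * s₀ + (L : ℝ) := by linarith
  rw [Real.rpow_def_of_pos hbase, Real.log_div (by positivity) (ne_of_gt hnpos),
    Real.log_pow]
  -- key exponent bound
  have hkey : ((2 * L : ℕ) * Real.log C₂ - Real.log n) * (s₀ / (2 * s₀ + (L : ℝ)))
      ≤ (2 * s₀ * Real.log C₂ + 2 * s₀ ^ 2) + (-(s₀ / 2) * t) := by
    rw [mul_comm, div_mul_eq_mul_div, div_le_iff₀ ha]
    push_cast
    rw [← htsq]
    nlinarith [mul_nonneg hs.le (sq_nonneg (t - 2 * s₀)),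
      mul_le_mul_of_nonneg_left hLt (by positivity : (0:ℝ) ≤ s₀ * t),
      mul_pos (mul_pos hs hlC) hs,
      mul_nonneg (mul_nonneg hs.le hs.le) hLpos.le]
  calc (L : ℝ) * Real.exp (((2 * L : ℕ) * Real.log C₂ - Real.log n) * (s₀ / (2 * s₀ + (L : ℝ))))
      ≤ t * Real.exp ((2 * s₀ * Real.log C₂ + 2 * s₀ ^ 2) + (-(s₀ / 2) * t)) := by
        apply mul_le_mul hLt (Real.exp_le_exp.mpr hkey) (Real.exp_pos _).le (by linarith)
    _ = Real.exp (2 * s₀ * Real.log C₂ + 2 * s₀ ^ 2) * t * Real.exp (-(s₀ / 2) * t) := by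
        rw [Real.exp_add]; ring
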